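/- arXiv:0803.3489 — 2 statements merged into one kernel-verified Lean document; each statement's English description precedes it below -/
import Mathlib

section
/- For any A, B in SL(3,C), tr(ABA^{-1}B^{-1}) + tr(BAB^{-1}A^{-1}) is a polynomial in the eight traces tr(A), tr(A^{-1}), tr(B), tr(B^{-1}), tr(AB), tr(A^{-1}B^{-1}), tr(AB^{-1}), tr(A^{-1}B). -/
open Matrix

set_option maxRecDepth 100000 in
set_option maxHeartbeats 12000000 in
private lemma key (A B : Matrix (Fin 3) (Fin 3) ℂ) :
    trace (A * B * A.adjugate * B.adjugate) + trace (B * A * B.adjugate * A.adjugate) =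
      trace A * trace A.adjugate * trace B * trace B.adjugate
        + B.det * (trace A * trace A.adjugate)
        + A.det * (trace B * trace B.adjugate)
        + trace (A * B) * trace (A.adjugate * B.adjugate)
        + trace (A * B.adjugate) * trace (A.adjugate * B)
        - trace A.adjugate * trace B.adjugate * trace (A * B)
        - trace A.adjugate * trace B * trace (A * B.adjugate)
        - trace A * trace B.adjugate * trace (A.adjugate * B)
        - trace A * trace B * trace (A.adjugate * B.adjugate)
        - 3 * (A.det * B.det) := by
  simp only [Matrix.trace_fin_three, Matrix.mul_apply, Fin.sum_univ_three,
    Matrix.adjugate_fin_three, Matrix.det_fin_three, Matrix.of_apply, Matrix.cons_val', Matrix.cons_val_zero,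
    Matrix.cons_val_one, Matrix.head_cons, Matrix.empty_val', Matrix.cons_val_fin_one,
    Matrix.head_fin_const, Matrix.cons_val_two, Matrix.tail_cons]
  generalize A 0 0 = a00
  generalize A 0 1 = a01
  generalize A 0 2 = a02
  generalize A 1 0 = a10
  generalize A 1 1 = a11
  generalize A 1 2 = a12
  generalize A 2 0 = a20
  generalize A 2 1 = a21
  generalize A 2 2 = a22
  generalize B 0 0 = b00
  generalize B 0 1 = b01
  generalize B 0 2 = b02
  generalize B 1 0 = b10
  generalize B 1 1 = b11
  generalize B 1 2 = b12
  generalize B 2 0 = b20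
  generalize B 2 1 = b21
  generalize B 2 2 = b22
  trans (a00*a00*a11*b01*b12*b20 + a00*a00*a11*b02*b10*b21 + (-2)*a00*a00*a11*b02*b11*b20 + (-1)*a00*a00*a12*b01*b10*b21 + a00*a00*a12*b01*b11*b20 + a00*a00*a12*b01*b20*b22 + (-1)*a00*a00*a12*b02*b20*b21 + (-1)*a00*a00*a21*b01*b10*b12 + a00*a00*a21*b02*b10*b11 + a00*a00*a21*b02*b10*b22 + (-1)*a00*a00*a21*b02*b12*b20 + (-2)*a00*a00*a22*b01*b10*b22 + a00*a00*a22*b01*b12*b20 + a00*a00*a22*b02*b10*b21 + (-1)*a00*a01*a10*b01*b12*b20 + (-1)*a00*a01*a10*b02*b10*b21 + (2)*a00*a01*a10*b02*b11*b20 + (-1)*a00*a01*a11*b00*b12*b20 + a00*a01*a11*b02*b10*b20 + a00*a01*a11*b10*b12*b21 + (-1)*a00*a01*a11*b11*b12*b20 + a00*a01*a12*b00*b10*b21 + (-1)*a00*a01*a12*b00*b11*b20 + (-1)*a00*a01*a12*b00*b20*b22 + a00*a01*a12*b02*b20*b20 + (-1)*a00*a01*a12*b10*b11*b21 + a00*a01*a12*b11*b11*b20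 + a00*a01*a12*b11*b20*b22 + (-1)*a00*a01*a12*b12*b20*b21 + a00*a01*a20*b01*b10*b12 + (-1)*a00*a01*a20*b02*b10*b11 + (-1)*a00*a01*a20*b02*b10*b22 + a00*a01*a20*b02*b12*b20 + a00*a01*a21*b00*b10*b12 + (-1)*a00*a01*a21*b02*b10*b10 + a00*a01*a21*b10*b12*b22 + (-1)*a00*a01*a21*b12*b12*b20 + (2)*a00*a01*a22*b00*b10*b22 + (-1)*a00*a01*a22*b00*b12*b20 + (-1)*a00*a01*a22*b02*b10*b20 + (-2)*a00*a01*a22*b10*b11*b22 + a00*a01*a22*b10*b12*b21 + a00*a01*a22*b11*b12*b20 + a00*a02*a10*b01*b10*b21 + (-1)*a00*a02*a10*b01*b11*b20 + (-1)*a00*a02*a10*b01*b20*b22 + a00*a02*a10*b02*b20*b21 + (-1)*a00*a02*a11*b00*b10*b21 + (2)*a00*a02*a11*b00*b11*b20 + (-1)*a00*a02*a11*b01*b10*b20 + a00*a02*a11*b10*b21*b22 + (-2)*a00*a02*a11*b11*b20*b22 + a00*a02*a11*b12*b20*b21 + a00*a02*a12*b00*b20*b21 + (-1)*a00*a02*a12*b01*b20*b20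 + (-1)*a00*a02*a12*b10*b21*b21 + a00*a02*a12*b11*b20*b21 + (2)*a00*a02*a20*b01*b10*b22 + (-1)*a00*a02*a20*b01*b12*b20 + (-1)*a00*a02*a20*b02*b10*b21 + (-1)*a00*a02*a21*b00*b10*b11 + (-1)*a00*a02*a21*b00*b10*b22 + a00*a02*a21*b00*b12*b20 + a00*a02*a21*b01*b10*b10 + a00*a02*a21*b10*b11*b22 + (-1)*a00*a02*a21*b10*b12*b21 + a00*a02*a21*b10*b22*b22 + (-1)*a00*a02*a21*b12*b20*b22 + (-1)*a00*a02*a22*b00*b10*b21 + a00*a02*a22*b01*b10*b20 + (-1)*a00*a02*a22*b10*b21*b22 + a00*a02*a22*b12*b20*b21 + (-1)*a00*a10*a11*b00*b02*b21 + a00*a10*a11*b01*b02*b20 + a00*a10*a11*b01*b12*b21 + (-1)*a00*a10*a11*b02*b11*b21 + a00*a10*a12*b00*b01*b21 + (-1)*a00*a10*a12*b01*b01*b20 + a00*a10*a12*b01*b21*b22 + (-1)*a00*a10*a12*b02*b21*b21 + a00*a10*a21*b00*b01*b12 + (-1)*a00*a10*a21*b00*b02*b11 + (-1)*a00*a10*a21*b00*b02*b22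 + (-1)*a00*a10*a21*b01*b11*b12 + a00*a10*a21*b02*b02*b20 + a00*a10*a21*b02*b11*b11 + a00*a10*a21*b02*b11*b22 + (-1)*a00*a10*a21*b02*b12*b21 + (2)*a00*a10*a22*b00*b01*b22 + (-1)*a00*a10*a22*b00*b02*b21 + (-1)*a00*a10*a22*b01*b02*b20 + (-2)*a00*a10*a22*b01*b11*b22 + a00*a10*a22*b01*b12*b21 + a00*a10*a22*b02*b11*b21 + (-2)*a00*a11*a11*b00*b12*b21 + a00*a11*a11*b01*b12*b20 + a00*a11*a11*b02*b10*b21 + (2)*a00*a11*a12*b00*b11*b21 + (-2)*a00*a11*a12*b00*b21*b22 + (-1)*a00*a11*a12*b01*b10*b21 + (-1)*a00*a11*a12*b01*b11*b20 + a00*a11*a12*b01*b20*b22 + a00*a11*a12*b02*b20*b21 + (-1)*a00*a11*a20*b00*b01*b12 + (2)*a00*a11*a20*b00*b02*b11 + (-1)*a00*a11*a20*b01*b02*b10 + a00*a11*a20*b01*b12*b22 + (-2)*a00*a11*a20*b02*b11*b22 + a00*a11*a20*b02*b12*b21 + (2)*a00*a11*a21*b00*b11*b12 + (-2)*a00*a11*a21*b00*b12*b22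 + (-1)*a00*a11*a21*b01*b10*b12 + (-1)*a00*a11*a21*b02*b10*b11 + a00*a11*a21*b02*b10*b22 + a00*a11*a21*b02*b12*b20 + (6)*a00*a11*a22*b00*b11*b22 + (-2)*a00*a11*a22*b00*b12*b21 + (-2)*a00*a11*a22*b01*b10*b22 + (-2)*a00*a11*a22*b02*b11*b20 + (2)*a00*a12*a12*b00*b21*b21 + (-2)*a00*a12*a12*b01*b20*b21 + (-1)*a00*a12*a20*b00*b01*b11 + (-1)*a00*a12*a20*b00*b01*b22 + a00*a12*a20*b00*b02*b21 + a00*a12*a20*b01*b01*b10 + a00*a12*a20*b01*b11*b22 + (-1)*a00*a12*a20*b01*b12*b21 + a00*a12*a20*b01*b22*b22 + (-1)*a00*a12*a20*b02*b21*b22 + (-2)*a00*a12*a21*b00*b11*b11 + (-2)*a00*a12*a21*b00*b11*b22 + (2)*a00*a12*a21*b00*b12*b21 + (-2)*a00*a12*a21*b00*b22*b22 + (2)*a00*a12*a21*b01*b10*b11 + (2)*a00*a12*a21*b02*b20*b22 + (-2)*a00*a12*a22*b00*b11*b21 + (2)*a00*a12*a22*b00*b21*b22 + a00*a12*a22*b01*b10*b21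 + a00*a12*a22*b01*b11*b20 + (-1)*a00*a12*a22*b01*b20*b22 + (-1)*a00*a12*a22*b02*b20*b21 + a00*a20*a21*b00*b02*b12 + (-1)*a00*a20*a21*b01*b12*b12 + (-1)*a00*a20*a21*b02*b02*b10 + a00*a20*a21*b02*b11*b12 + (-1)*a00*a20*a22*b00*b01*b12 + a00*a20*a22*b01*b02*b10 + (-1)*a00*a20*a22*b01*b12*b22 + a00*a20*a22*b02*b12*b21 + (2)*a00*a21*a21*b00*b12*b12 + (-2)*a00*a21*a21*b02*b10*b12 + (-2)*a00*a21*a22*b00*b11*b12 + (2)*a00*a21*a22*b00*b12*b22 + a00*a21*a22*b01*b10*b12 + a00*a21*a22*b02*b10*b11 + (-1)*a00*a21*a22*b02*b10*b22 + (-1)*a00*a21*a22*b02*b12*b20 + (-2)*a00*a22*a22*b00*b12*b21 + a00*a22*a22*b01*b12*b20 + a00*a22*a22*b02*b10*b21 + a01*a01*a10*b00*b12*b20 + (-1)*a01*a01*a10*b02*b10*b20 + (-1)*a01*a01*a10*b10*b12*b21 + a01*a01*a10*b11*b12*b20 + a01*a01*a12*b10*b10*b21 + (-1)*a01*a01*a12*b10*b11*b20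 + (-1)*a01*a01*a12*b10*b20*b22 + a01*a01*a12*b12*b20*b20 + (-1)*a01*a01*a20*b00*b10*b12 + a01*a01*a20*b02*b10*b10 + (-1)*a01*a01*a20*b10*b12*b22 + a01*a01*a20*b12*b12*b20 + (2)*a01*a01*a22*b10*b10*b22 + (-2)*a01*a01*a22*b10*b12*b20 + (-1)*a01*a02*a10*b00*b11*b20 + a01*a02*a10*b00*b20*b22 + a01*a02*a10*b01*b10*b20 + (-1)*a01*a02*a10*b02*b20*b20 + a01*a02*a10*b10*b11*b21 + (-1)*a01*a02*a10*b10*b21*b22 + (-1)*a01*a02*a10*b11*b11*b20 + a01*a02*a10*b11*b20*b22 + (-1)*a01*a02*a11*b10*b10*b21 + a01*a02*a11*b10*b11*b20 + a01*a02*a11*b10*b20*b22 + (-1)*a01*a02*a11*b12*b20*b20 + (2)*a01*a02*a12*b10*b20*b21 + (-2)*a01*a02*a12*b11*b20*b20 + a01*a02*a20*b00*b10*b11 + (-1)*a01*a02*a20*b00*b10*b22 + (-1)*a01*a02*a20*b01*b10*b10 + a01*a02*a20*b02*b10*b20 + a01*a02*a20*b10*b11*b22 + (-1)*a01*a02*a20*b10*b22*b22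 + (-1)*a01*a02*a20*b11*b12*b20 + a01*a02*a20*b12*b20*b22 + (-2)*a01*a02*a21*b10*b10*b22 + (2)*a01*a02*a21*b10*b12*b20 + (-1)*a01*a02*a22*b10*b10*b21 + a01*a02*a22*b10*b11*b20 + a01*a02*a22*b10*b20*b22 + (-1)*a01*a02*a22*b12*b20*b20 + a01*a10*a10*b00*b02*b21 + (-1)*a01*a10*a10*b01*b02*b20 + (-1)*a01*a10*a10*b01*b12*b21 + a01*a10*a10*b02*b11*b21 + (2)*a01*a10*a11*b00*b12*b21 + (-1)*a01*a10*a11*b01*b12*b20 + (-1)*a01*a10*a11*b02*b10*b21 + (-1)*a01*a10*a12*b00*b00*b21 + a01*a10*a12*b00*b01*b20 + (-1)*a01*a10*a12*b00*b11*b21 + a01*a10*a12*b00*b21*b22 + a01*a10*a12*b01*b10*b21 + (-1)*a01*a10*a12*b01*b20*b22 + a01*a10*a12*b11*b21*b22 + (-1)*a01*a10*a12*b12*b21*b21 + (-1)*a01*a10*a20*b00*b02*b11 + a01*a10*a20*b00*b02*b22 + a01*a10*a20*b01*b02*b10 + a01*a10*a20*b01*b11*b12 + (-1)*a01*a10*a20*b01*b12*b22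 + (-1)*a01*a10*a20*b02*b02*b20 + (-1)*a01*a10*a20*b02*b11*b11 + a01*a10*a20*b02*b11*b22 + (-1)*a01*a10*a21*b00*b00*b12 + a01*a10*a21*b00*b02*b10 + (-1)*a01*a10*a21*b00*b11*b12 + a01*a10*a21*b00*b12*b22 + a01*a10*a21*b01*b10*b12 + (-1)*a01*a10*a21*b02*b10*b22 + a01*a10*a21*b11*b12*b22 + (-1)*a01*a10*a21*b12*b12*b21 + (-2)*a01*a10*a22*b00*b00*b22 + (2)*a01*a10*a22*b00*b02*b20 + (-2)*a01*a10*a22*b00*b11*b22 + (2)*a01*a10*a22*b01*b10*b22 + (-2)*a01*a10*a22*b11*b11*b22 + (2)*a01*a10*a22*b11*b12*b21 + (-1)*a01*a11*a12*b00*b10*b21 + a01*a11*a12*b01*b10*b20 + (-1)*a01*a11*a12*b10*b21*b22 + a01*a11*a12*b12*b20*b21 + a01*a11*a20*b00*b00*b12 + (-1)*a01*a11*a20*b00*b02*b10 + (-1)*a01*a11*a20*b00*b11*b12 + a01*a11*a20*b00*b12*b22 + a01*a11*a20*b02*b10*b11 + (-1)*a01*a11*a20*b02*b12*b20 + (-1)*a01*a11*a20*b11*b12*b22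 + a01*a11*a20*b12*b12*b21 + (-2)*a01*a11*a22*b00*b10*b22 + a01*a11*a22*b00*b12*b20 + a01*a11*a22*b02*b10*b20 + (2)*a01*a11*a22*b10*b11*b22 + (-1)*a01*a11*a22*b10*b12*b21 + (-1)*a01*a11*a22*b11*b12*b20 + (-1)*a01*a12*a12*b00*b20*b21 + a01*a12*a12*b01*b20*b20 + a01*a12*a12*b10*b21*b21 + (-1)*a01*a12*a12*b11*b20*b21 + a01*a12*a20*b00*b00*b11 + a01*a12*a20*b00*b00*b22 + (-1)*a01*a12*a20*b00*b01*b10 + (-1)*a01*a12*a20*b00*b02*b20 + a01*a12*a20*b00*b11*b11 + a01*a12*a20*b00*b22*b22 + (-1)*a01*a12*a20*b01*b10*b11 + (-1)*a01*a12*a20*b02*b20*b22 + a01*a12*a20*b11*b11*b22 + (-1)*a01*a12*a20*b11*b12*b21 + a01*a12*a20*b11*b22*b22 + (-1)*a01*a12*a20*b12*b21*b22 + a01*a12*a21*b00*b10*b11 + a01*a12*a21*b00*b10*b22 + (-1)*a01*a12*a21*b00*b12*b20 + (-1)*a01*a12*a21*b01*b10*b10 + (-1)*a01*a12*a21*b10*b11*b22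 + a01*a12*a21*b10*b12*b21 + (-1)*a01*a12*a21*b10*b22*b22 + a01*a12*a21*b12*b20*b22 + a01*a12*a22*b00*b11*b20 + (-1)*a01*a12*a22*b00*b20*b22 + (-1)*a01*a12*a22*b01*b10*b20 + a01*a12*a22*b02*b20*b20 + (-1)*a01*a12*a22*b10*b11*b21 + a01*a12*a22*b10*b21*b22 + a01*a12*a22*b11*b11*b20 + (-1)*a01*a12*a22*b11*b20*b22 + (-1)*a01*a20*a20*b00*b02*b12 + a01*a20*a20*b01*b12*b12 + a01*a20*a20*b02*b02*b10 + (-1)*a01*a20*a20*b02*b11*b12 + (-2)*a01*a20*a21*b00*b12*b12 + (2)*a01*a20*a21*b02*b10*b12 + a01*a20*a22*b00*b00*b12 + (-1)*a01*a20*a22*b00*b02*b10 + a01*a20*a22*b00*b11*b12 + (-1)*a01*a20*a22*b00*b12*b22 + (-1)*a01*a20*a22*b01*b10*b12 + a01*a20*a22*b02*b10*b22 + (-1)*a01*a20*a22*b11*b12*b22 + a01*a20*a22*b12*b12*b21 + a01*a21*a22*b00*b10*b12 + (-1)*a01*a21*a22*b02*b10*b10 + a01*a21*a22*b10*b12*b22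 + (-1)*a01*a21*a22*b12*b12*b20 + a01*a22*a22*b00*b12*b20 + (-1)*a01*a22*a22*b02*b10*b20 + (-1)*a01*a22*a22*b10*b12*b21 + a01*a22*a22*b11*b12*b20 + (-1)*a02*a02*a10*b00*b20*b21 + a02*a02*a10*b01*b20*b20 + a02*a02*a10*b10*b21*b21 + (-1)*a02*a02*a10*b11*b20*b21 + (-2)*a02*a02*a11*b10*b20*b21 + (2)*a02*a02*a11*b11*b20*b20 + a02*a02*a20*b00*b10*b21 + (-1)*a02*a02*a20*b01*b10*b20 + a02*a02*a20*b10*b21*b22 + (-1)*a02*a02*a20*b12*b20*b21 + a02*a02*a21*b10*b10*b21 + (-1)*a02*a02*a21*b10*b11*b20 + (-1)*a02*a02*a21*b10*b20*b22 + a02*a02*a21*b12*b20*b20 + (-1)*a02*a10*a10*b00*b01*b21 + a02*a10*a10*b01*b01*b20 + (-1)*a02*a10*a10*b01*b21*b22 + a02*a10*a10*b02*b21*b21 + a02*a10*a11*b00*b00*b21 + (-1)*a02*a10*a11*b00*b01*b20 + (-1)*a02*a10*a11*b00*b11*b21 + a02*a10*a11*b00*b21*b22 + a02*a10*a11*b01*b11*b20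 + (-1)*a02*a10*a11*b02*b20*b21 + (-1)*a02*a10*a11*b11*b21*b22 + a02*a10*a11*b12*b21*b21 + (-2)*a02*a10*a12*b00*b21*b21 + (2)*a02*a10*a12*b01*b20*b21 + a02*a10*a20*b00*b01*b11 + (-1)*a02*a10*a20*b00*b01*b22 + (-1)*a02*a10*a20*b01*b01*b10 + a02*a10*a20*b01*b02*b20 + a02*a10*a20*b01*b11*b22 + (-1)*a02*a10*a20*b01*b22*b22 + (-1)*a02*a10*a20*b02*b11*b21 + a02*a10*a20*b02*b21*b22 + a02*a10*a21*b00*b00*b11 + a02*a10*a21*b00*b00*b22 + (-1)*a02*a10*a21*b00*b01*b10 + (-1)*a02*a10*a21*b00*b02*b20 + a02*a10*a21*b00*b11*b11 + a02*a10*a21*b00*b22*b22 + (-1)*a02*a10*a21*b01*b10*b11 + (-1)*a02*a10*a21*b02*b20*b22 + a02*a10*a21*b11*b11*b22 + (-1)*a02*a10*a21*b11*b12*b21 + a02*a10*a21*b11*b22*b22 + (-1)*a02*a10*a21*b12*b21*b22 + a02*a10*a22*b00*b00*b21 + (-1)*a02*a10*a22*b00*b01*b20 + a02*a10*a22*b00*b11*b21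 + (-1)*a02*a10*a22*b00*b21*b22 + (-1)*a02*a10*a22*b01*b10*b21 + a02*a10*a22*b01*b20*b22 + (-1)*a02*a10*a22*b11*b21*b22 + a02*a10*a22*b12*b21*b21 + a02*a11*a11*b00*b10*b21 + (-1)*a02*a11*a11*b01*b10*b20 + a02*a11*a11*b10*b21*b22 + (-1)*a02*a11*a11*b12*b20*b21 + a02*a11*a12*b00*b20*b21 + (-1)*a02*a11*a12*b01*b20*b20 + (-1)*a02*a11*a12*b10*b21*b21 + a02*a11*a12*b11*b20*b21 + (-2)*a02*a11*a20*b00*b00*b11 + (2)*a02*a11*a20*b00*b01*b10 + (-2)*a02*a11*a20*b00*b11*b22 + (2)*a02*a11*a20*b02*b11*b20 + (-2)*a02*a11*a20*b11*b22*b22 + (2)*a02*a11*a20*b12*b21*b22 + (-1)*a02*a11*a21*b00*b10*b11 + a02*a11*a21*b00*b10*b22 + a02*a11*a21*b01*b10*b10 + (-1)*a02*a11*a21*b02*b10*b20 + (-1)*a02*a11*a21*b10*b11*b22 + a02*a11*a21*b10*b22*b22 + a02*a11*a21*b11*b12*b20 + (-1)*a02*a11*a21*b12*b20*b22 + a02*a11*a22*b00*b10*b21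 + (-2)*a02*a11*a22*b00*b11*b20 + a02*a11*a22*b01*b10*b20 + (-1)*a02*a11*a22*b10*b21*b22 + (2)*a02*a11*a22*b11*b20*b22 + (-1)*a02*a11*a22*b12*b20*b21 + (-1)*a02*a12*a20*b00*b00*b21 + a02*a12*a20*b00*b01*b20 + a02*a12*a20*b00*b11*b21 + (-1)*a02*a12*a20*b00*b21*b22 + (-1)*a02*a12*a20*b01*b11*b20 + a02*a12*a20*b02*b20*b21 + a02*a12*a20*b11*b21*b22 + (-1)*a02*a12*a20*b12*b21*b21 + (-1)*a02*a12*a21*b00*b10*b21 + a02*a12*a21*b00*b11*b20 + a02*a12*a21*b00*b20*b22 + (-1)*a02*a12*a21*b02*b20*b20 + a02*a12*a21*b10*b11*b21 + (-1)*a02*a12*a21*b11*b11*b20 + (-1)*a02*a12*a21*b11*b20*b22 + a02*a12*a21*b12*b20*b21 + a02*a20*a20*b00*b01*b12 + (-1)*a02*a20*a20*b01*b02*b10 + a02*a20*a20*b01*b12*b22 + (-1)*a02*a20*a20*b02*b12*b21 + (-1)*a02*a20*a21*b00*b00*b12 + a02*a20*a21*b00*b02*b10 + a02*a20*a21*b00*b11*b12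 + (-1)*a02*a20*a21*b00*b12*b22 + (-1)*a02*a20*a21*b02*b10*b11 + a02*a20*a21*b02*b12*b20 + a02*a20*a21*b11*b12*b22 + (-1)*a02*a20*a21*b12*b12*b21 + (2)*a02*a20*a22*b00*b12*b21 + (-1)*a02*a20*a22*b01*b12*b20 + (-1)*a02*a20*a22*b02*b10*b21 + (-1)*a02*a21*a21*b00*b10*b12 + a02*a21*a21*b02*b10*b10 + (-1)*a02*a21*a21*b10*b12*b22 + a02*a21*a21*b12*b12*b20 + (-1)*a02*a21*a22*b00*b12*b20 + a02*a21*a22*b02*b10*b20 + a02*a21*a22*b10*b12*b21 + (-1)*a02*a21*a22*b11*b12*b20 + a10*a10*a21*b01*b01*b12 + (-1)*a10*a10*a21*b01*b02*b11 + (-1)*a10*a10*a21*b01*b02*b22 + a10*a10*a21*b02*b02*b21 + (2)*a10*a10*a22*b01*b01*b22 + (-2)*a10*a10*a22*b01*b02*b21 + (-1)*a10*a11*a20*b01*b01*b12 + a10*a11*a20*b01*b02*b11 + a10*a11*a20*b01*b02*b22 + (-1)*a10*a11*a20*b02*b02*b21 + (-1)*a10*a11*a21*b00*b01*b12 + a10*a11*a21*b01*b02*b10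 + (-1)*a10*a11*a21*b01*b12*b22 + a10*a11*a21*b02*b12*b21 + (-2)*a10*a11*a22*b00*b01*b22 + a10*a11*a22*b00*b02*b21 + a10*a11*a22*b01*b02*b20 + (2)*a10*a11*a22*b01*b11*b22 + (-1)*a10*a11*a22*b01*b12*b21 + (-1)*a10*a11*a22*b02*b11*b21 + (-2)*a10*a12*a20*b01*b01*b22 + (2)*a10*a12*a20*b01*b02*b21 + a10*a12*a21*b00*b01*b11 + a10*a12*a21*b00*b01*b22 + (-1)*a10*a12*a21*b00*b02*b21 + (-1)*a10*a12*a21*b01*b01*b10 + (-1)*a10*a12*a21*b01*b11*b22 + a10*a12*a21*b01*b12*b21 + (-1)*a10*a12*a21*b01*b22*b22 + a10*a12*a21*b02*b21*b22 + a10*a12*a22*b00*b01*b21 + (-1)*a10*a12*a22*b01*b01*b20 + a10*a12*a22*b01*b21*b22 + (-1)*a10*a12*a22*b02*b21*b21 + (2)*a10*a20*a21*b01*b02*b12 + (-2)*a10*a20*a21*b02*b02*b11 + (-1)*a10*a20*a22*b01*b01*b12 + a10*a20*a22*b01*b02*b11 + a10*a20*a22*b01*b02*b22 + (-1)*a10*a20*a22*b02*b02*b21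 + (-1)*a10*a21*a21*b00*b02*b12 + a10*a21*a21*b01*b12*b12 + a10*a21*a21*b02*b02*b10 + (-1)*a10*a21*a21*b02*b11*b12 + a10*a21*a22*b00*b02*b11 + (-1)*a10*a21*a22*b00*b02*b22 + (-1)*a10*a21*a22*b01*b02*b10 + (-1)*a10*a21*a22*b01*b11*b12 + a10*a21*a22*b01*b12*b22 + a10*a21*a22*b02*b02*b20 + a10*a21*a22*b02*b11*b11 + (-1)*a10*a21*a22*b02*b11*b22 + a10*a22*a22*b00*b02*b21 + (-1)*a10*a22*a22*b01*b02*b20 + (-1)*a10*a22*a22*b01*b12*b21 + a10*a22*a22*b02*b11*b21 + a11*a11*a20*b00*b01*b12 + (-1)*a11*a11*a20*b01*b02*b10 + a11*a11*a20*b01*b12*b22 + (-1)*a11*a11*a20*b02*b12*b21 + (-2)*a11*a11*a22*b01*b10*b22 + a11*a11*a22*b01*b12*b20 + a11*a11*a22*b02*b10*b21 + (-1)*a11*a12*a20*b00*b01*b11 + a11*a12*a20*b00*b01*b22 + a11*a12*a20*b01*b01*b10 + (-1)*a11*a12*a20*b01*b02*b20 + (-1)*a11*a12*a20*b01*b11*b22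 + a11*a12*a20*b01*b22*b22 + a11*a12*a20*b02*b11*b21 + (-1)*a11*a12*a20*b02*b21*b22 + (2)*a11*a12*a21*b01*b10*b22 + (-1)*a11*a12*a21*b01*b12*b20 + (-1)*a11*a12*a21*b02*b10*b21 + a11*a12*a22*b01*b10*b21 + (-1)*a11*a12*a22*b01*b11*b20 + (-1)*a11*a12*a22*b01*b20*b22 + a11*a12*a22*b02*b20*b21 + (-2)*a11*a20*a20*b01*b02*b12 + (2)*a11*a20*a20*b02*b02*b11 + a11*a20*a21*b00*b02*b12 + (-1)*a11*a20*a21*b01*b12*b12 + (-1)*a11*a20*a21*b02*b02*b10 + a11*a20*a21*b02*b11*b12 + a11*a20*a22*b00*b01*b12 + (-2)*a11*a20*a22*b00*b02*b11 + a11*a20*a22*b01*b02*b10 + (-1)*a11*a20*a22*b01*b12*b22 + (2)*a11*a20*a22*b02*b11*b22 + (-1)*a11*a20*a22*b02*b12*b21 + a11*a21*a22*b01*b10*b12 + (-1)*a11*a21*a22*b02*b10*b11 + (-1)*a11*a21*a22*b02*b10*b22 + a11*a21*a22*b02*b12*b20 + a11*a22*a22*b01*b12*b20 + a11*a22*a22*b02*b10*b21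 + (-2)*a11*a22*a22*b02*b11*b20 + (-1)*a12*a12*a20*b00*b01*b21 + a12*a12*a20*b01*b01*b20 + (-1)*a12*a12*a20*b01*b21*b22 + a12*a12*a20*b02*b21*b21 + (-1)*a12*a12*a21*b01*b10*b21 + a12*a12*a21*b01*b11*b20 + a12*a12*a21*b01*b20*b22 + (-1)*a12*a12*a21*b02*b20*b21 + a12*a20*a20*b01*b01*b12 + (-1)*a12*a20*a20*b01*b02*b11 + (-1)*a12*a20*a20*b01*b02*b22 + a12*a20*a20*b02*b02*b21 + (-1)*a12*a20*a21*b00*b01*b12 + a12*a20*a21*b00*b02*b11 + a12*a20*a21*b00*b02*b22 + a12*a20*a21*b01*b11*b12 + (-1)*a12*a20*a21*b02*b02*b20 + (-1)*a12*a20*a21*b02*b11*b11 + (-1)*a12*a20*a21*b02*b11*b22 + a12*a20*a21*b02*b12*b21 + (-1)*a12*a20*a22*b00*b02*b21 + a12*a20*a22*b01*b02*b20 + a12*a20*a22*b01*b12*b21 + (-1)*a12*a20*a22*b02*b11*b21 + (-1)*a12*a21*a21*b01*b10*b12 + a12*a21*a21*b02*b10*b11 + a12*a21*a21*b02*b10*b22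 + (-1)*a12*a21*a21*b02*b12*b20 + (-1)*a12*a21*a22*b01*b12*b20 + (-1)*a12*a21*a22*b02*b10*b21 + (2)*a12*a21*a22*b02*b11*b20)
  · ring1
  · ring1

theorem stmt_2 :
    ∃ P : MvPolynomial (Fin 8) ℂ,
      ∀ A B : Matrix (Fin 3) (Fin 3) ℂ, A.det = 1 → B.det = 1 →
        trace (A * B * A⁻¹ * B⁻¹) + trace (B * A * B⁻¹ * A⁻¹) =
          MvPolynomial.eval
            ![trace A, trace A⁻¹, trace B, trace B⁻¹, trace (A * B),
              trace (A⁻¹ * B⁻¹), trace (A * B⁻¹), trace (A⁻¹ * B)] P := by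
  classical
  refine ⟨MvPolynomial.X 0 * MvPolynomial.X 1 * MvPolynomial.X 2 * MvPolynomial.X 3
    + MvPolynomial.X 0 * MvPolynomial.X 1 + MvPolynomial.X 2 * MvPolynomial.X 3
    + MvPolynomial.X 4 * MvPolynomial.X 5 + MvPolynomial.X 6 * MvPolynomial.X 7
    - MvPolynomial.X 1 * MvPolynomial.X 3 * MvPolynomial.X 4
    - MvPolynomial.X 1 * MvPolynomial.X 2 * MvPolynomial.X 6
    - MvPolynomial.X 0 * MvPolynomial.X 3 * MvPolynomial.X 7
    - MvPolynomial.X 0 * MvPolynomial.X 2 * MvPolynomial.X 5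
    - MvPolynomial.C 3, ?_⟩
  intro A B hA hB
  have hAi : A⁻¹ = A.adjugate := by
    rw [Matrix.inv_def, hA, Ring.inverse_one, one_smul]
  have hBi : B⁻¹ = B.adjugate := by
    rw [Matrix.inv_def, hB, Ring.inverse_one, one_smul]
  rw [hAi, hBi]
  have h := key A B
  rw [hA, hB] at h
  simp only [map_sub, map_add, _root_.map_mul, MvPolynomial.eval_X, MvPolynomial.eval_C,
    show (![trace A, trace A.adjugate, trace B, trace B.adjugate, trace (A * B),
      trace (A.adjugate * B.adjugate), trace (A * B.adjugate), trace (A.adjugate * B)] : Fin 8 → ℂ) 0 = trace A from rfl,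
    show (![trace A, trace A.adjugate, trace B, trace B.adjugate, trace (A * B),
      trace (A.adjugate * B.adjugate), trace (A * B.adjugate), trace (A.adjugate * B)] : Fin 8 → ℂ) 1 = trace A.adjugate from rfl,
    show (![trace A, trace A.adjugate, trace B, trace B.adjugate, trace (A * B),
      trace (A.adjugate * B.adjugate), trace (A * B.adjugate), trace (A.adjugate * B)] : Fin 8 → ℂ) 2 = trace B from rfl,
    show (![trace A, trace A.adjugate, trace B, trace B.adjugate, trace (A * B),
      trace (A.adjugate * B.adjugate), trace (A * B.adjugate), trace (A.adjugate * B)] : Fin 8 → ℂ) 3 = trace B.adjugate from rfl,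
    show (![trace A, trace A.adjugate, trace B, trace B.adjugate, trace (A * B),
      trace (A.adjugate * B.adjugate), trace (A * B.adjugate), trace (A.adjugate * B)] : Fin 8 → ℂ) 4 = trace (A * B) from rfl,
    show (![trace A, trace A.adjugate, trace B, trace B.adjugate, trace (A * B),
      trace (A.adjugate * B.adjugate), trace (A * B.adjugate), trace (A.adjugate * B)] : Fin 8 → ℂ) 5 = trace (A.adjugate * B.adjugate) from rfl,
    show (![trace A, trace A.adjugate, trace B, trace B.adjugate, trace (A * B),
      trace (A.adjugate * B.adjugate), trace (A * B.adjugate), trace (A.adjugate * B)] : Fin 8 → ℂ) 6 = trace (A * B.adjugate) from rfl,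
    show (![trace A, trace A.adjugate, trace B, trace B.adjugate, trace (A * B),
      trace (A.adjugate * B.adjugate), trace (A * B.adjugate), trace (A.adjugate * B)] : Fin 8 → ℂ) 7 = trace (A.adjugate * B) from rfl]
  rw [h]; ring
end

section
/- For all A, B in SL(3,C): tr(A^{-1}BA^{-1}B^{-1}) = tr(A^{-1}B)·tr(A^{-1}B^{-1}) + tr(A) + tr(AB)·tr(B^{-1}) − tr(A)·tr(B)·tr(B^{-1}) + tr(B)·tr(AB^{-1}). -/
open Matrix

theorem stmt_4 (A B : Matrix (Fin 3) (Fin 3) ℂ) (hA : A.det = 1) (hB : B.det = 1) :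
    trace (A⁻¹ * B * A⁻¹ * B⁻¹) =
      trace (A⁻¹ * B) * trace (A⁻¹ * B⁻¹) + trace A + trace (A * B) * trace B⁻¹
        - trace A * trace B * trace B⁻¹ + trace B * trace (A * B⁻¹) := by
  have hA' : A⁻¹ = A.adjugate := by
    rw [Matrix.inv_def, hA]; simp
  have hB' : B⁻¹ = B.adjugate := by
    rw [Matrix.inv_def, hB]; simp
  have hdA := hA
  rw [Matrix.det_fin_three] at hdA
  have hdB := hB
  rw [Matrix.det_fin_three] at hdB
  rw [hA', hB']
  simp only [Matrix.trace_fin_three, Matrix.mul_apply, Matrix.adjugate_fin_three, Fin.sum_univ_three, Matrix.cons_val', Matrix.cons_val_zero, Matrix.cons_val_one, Matrix.head_cons, Matrix.empty_val', Matrix.cons_val_fin_one, Matrix.head_fin_const, Matrix.of_apply, Matrix.cons_val_two, Matrix.tail_cons, Matrix.head_fin_const]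
  linear_combination ((A 0 0 + A 1 1 + A 2 2) * (B 0 0 * (B 1 1 * B 2 2 - B 1 2 * B 2 1) - B 0 1 * (B 1 0 * B 2 2 - B 1 2 * B 2 0) + B 0 2 * (B 1 0 * B 2 1 - B 1 1 * B 2 0)) + (A 0 0 * B 0 0 + A 0 1 * B 1 0 + A 0 2 * B 2 0 + A 1 0 * B 0 1 + A 1 1 * B 1 1 + A 1 2 * B 2 1 + A 2 0 * B 0 2 + A 2 1 * B 1 2 + A 2 2 * B 2 2) * ((B 1 1 * B 2 2 - B 1 2 * B 2 1) + (B 0 0 * B 2 2 - B 0 2 * B 2 0) + (B 0 0 * B 1 1 - B 0 1 * B 1 0)) - (A 0 0 + A 1 1 + A 2 2) * (B 0 0 + B 1 1 + B 2 2) * ((B 1 1 * B 2 2 - B 1 2 * B 2 1) + (B 0 0 * B 2 2 - B 0 2 * B 2 0) + (B 0 0 * B 1 1 - B 0 1 * B 1 0)) + (B 0 0 + B 1 1 + B 2 2) * (A 0 0 * (B 1 1 * B 2 2 - B 1 2 * B 2 1) + A 0 1 * (-1) * (B 1 0 * B 2 2 - B 1 2 * B 2 0) + A 0 2 * (B 1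 0 * B 2 1 - B 1 1 * B 2 0) + A 1 0 * (-1) * (B 0 1 * B 2 2 - B 0 2 * B 2 1) + A 1 1 * (B 0 0 * B 2 2 - B 0 2 * B 2 0) + A 1 2 * (-1) * (B 0 0 * B 2 1 - B 0 1 * B 2 0) + A 2 0 * (B 0 1 * B 1 2 - B 0 2 * B 1 1) + A 2 1 * (-1) * (B 0 0 * B 1 2 - B 0 2 * B 1 0) + A 2 2 * (B 0 0 * B 1 1 - B 0 1 * B 1 0))) * hdA + (A 0 0 + A 1 1 + A 2 2) * hdB
end
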